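/- Let T be a bounded linear operator on a complex Hilbert space. Then w(T)² ≤ (α/2) w(T²) + ‖(α/4)|T|² + (1 - 3α/4)|T*|²‖ for every α ∈ [0,1]; in particular, taking α = 1 recovers w(T)² ≤ (1/2)w(T²) + (1/4)‖|T|² + |T*|²‖. -/

import Mathlib

open ContinuousLinearMap

lemma buzano {H : Type*} [NormedAddCommGroup H] [InnerProductSpace ℂ H]
    (a b e : H) (he : ‖e‖ = 1) :
    ‖(inner ℂ a e : ℂ) * (inner ℂ e b : ℂ)‖ ≤ (‖a‖ * ‖b‖ + ‖(inner ℂ a b : ℂ)‖) / 2 := by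
  set v : H := (2 * (inner ℂ e a : ℂ)) • e - a with hv
  have hc : (inner ℂ ((2 * (inner ℂ e a : ℂ)) • e) a : ℂ)
      = ((2 * ‖(inner ℂ e a : ℂ)‖ ^ 2 : ℝ) : ℂ) := by
    rw [inner_smul_left, map_mul, mul_assoc, RCLike.conj_mul]
    push_cast
    rw [show ((starRingEnd ℂ) 2) = 2 from map_ofNat _ 2]
    norm_num
  have hx : ‖(2 * (inner ℂ e a : ℂ)) • e‖ = 2 * ‖(inner ℂ e a : ℂ)‖ := by
    rw [norm_smul, he, mul_one, norm_mul]; norm_num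
  have h2 : ‖v‖ ^ 2 = ‖a‖ ^ 2 := by
    rw [hv, @norm_sub_sq ℂ, hx, hc]
    push_cast
    simp [← Complex.ofReal_pow, Complex.ofReal_re]
    ring
  have hnv : ‖v‖ = ‖a‖ := by
    have := congrArg Real.sqrt h2
    rwa [Real.sqrt_sq (norm_nonneg _), Real.sqrt_sq (norm_nonneg _)] at this
  have hib : (inner ℂ v b : ℂ) = 2 * (inner ℂ a e : ℂ) * (inner ℂ e b : ℂ) - (inner ℂ a b : ℂ) := by
    rw [hv, inner_sub_left, inner_smul_left, map_mul, inner_conj_symm,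
      show ((starRingEnd ℂ) 2) = 2 from map_ofNat _ 2]
  have key : ‖2 * (inner ℂ a e : ℂ) * (inner ℂ e b : ℂ) - (inner ℂ a b : ℂ)‖ ≤ ‖a‖ * ‖b‖ := by
    rw [← hib]
    calc ‖(inner ℂ v b : ℂ)‖ ≤ ‖v‖ * ‖b‖ := norm_inner_le_norm v b
      _ = ‖a‖ * ‖b‖ := by rw [hnv]
  have h3 : ‖2 * (inner ℂ a e : ℂ) * (inner ℂ e b : ℂ)‖
      ≤ ‖a‖ * ‖b‖ + ‖(inner ℂ a b : ℂ)‖ := by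
    calc ‖2 * (inner ℂ a e : ℂ) * (inner ℂ e b : ℂ)‖
        = ‖(2 * (inner ℂ a e : ℂ) * (inner ℂ e b : ℂ) - (inner ℂ a b : ℂ)) + (inner ℂ a b : ℂ)‖ := by
          ring_nf
      _ ≤ _ := (norm_add_le _ _).trans (by gcongr)
  have h4 : ‖2 * (inner ℂ a e : ℂ) * (inner ℂ e b : ℂ)‖
      = 2 * ‖(inner ℂ a e : ℂ) * (inner ℂ e b : ℂ)‖ := by
    rw [mul_assoc, norm_mul]; norm_num
  linarith



open ContinuousLinearMap in
/-- The numerical radius `w(T) = sup { |⟨Tx,x⟩| : ‖x‖ = 1 }`. -/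
noncomputable def numRad {H : Type*} [NormedAddCommGroup H] [InnerProductSpace ℂ H]
    (T : H →L[ℂ] H) : ℝ :=
  sSup {r : ℝ | ∃ x : H, ‖x‖ = 1 ∧ r = ‖(inner ℂ (T x) x : ℂ)‖}

/-- `|T| = (T^*T)^{1/2}`; note `absOp (adjoint T) = (TT^*)^{1/2} = |T^*|`. -/
noncomputable def absOp {H : Type*} [NormedAddCommGroup H] [InnerProductSpace ℂ H]
    [CompleteSpace H] (T : H →L[ℂ] H) : H →L[ℂ] H :=
  CFC.sqrt (ContinuousLinearMap.adjoint T * T)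

/-- Real powers of a (positive) operator via the continuous functional calculus. -/
noncomputable def opRPow {H : Type*} [NormedAddCommGroup H] [InnerProductSpace ℂ H]
    [CompleteSpace H] (A : H →L[ℂ] H) (r : ℝ) : H →L[ℂ] H :=
  CFC.rpow A r


set_option synthInstance.maxHeartbeats 1000000
set_option maxHeartbeats 1000000

open ContinuousLinearMap

lemma numRad_bddAbove {H : Type*} [NormedAddCommGroup H] [InnerProductSpace ℂ H]
    (T : H →L[ℂ] H) :
    BddAbove {r : ℝ | ∃ x : H, ‖x‖ = 1 ∧ r = ‖(inner ℂ (T x) x : ℂ)‖} := by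
  refine ⟨‖T‖, fun r hr => ?_⟩
  obtain ⟨x, hx, rfl⟩ := hr
  calc ‖(inner ℂ (T x) x : ℂ)‖ ≤ ‖T x‖ * ‖x‖ := norm_inner_le_norm _ _
    _ ≤ ‖T‖ * ‖x‖ * ‖x‖ := by gcongr; exact T.le_opNorm x
    _ = ‖T‖ := by rw [hx]; ring

lemma numRad_nonneg {H : Type*} [NormedAddCommGroup H] [InnerProductSpace ℂ H]
    (T : H →L[ℂ] H) : 0 ≤ numRad T := by
  apply Real.sSup_nonneg
  rintro r ⟨x, hx, rfl⟩
  exact norm_nonneg _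

lemma le_numRad {H : Type*} [NormedAddCommGroup H] [InnerProductSpace ℂ H]
    (T : H →L[ℂ] H) {x : H} (hx : ‖x‖ = 1) :
    ‖(inner ℂ (T x) x : ℂ)‖ ≤ numRad T :=
  le_csSup (numRad_bddAbove T) ⟨x, hx, rfl⟩

lemma stmt11_pointwise {H : Type*} [NormedAddCommGroup H] [InnerProductSpace ℂ H]
    [CompleteSpace H] (T : H →L[ℂ] H) {α : ℝ} (hα0 : 0 ≤ α) (hα1 : α ≤ 1)
    {x : H} (hx : ‖x‖ = 1) :
    ‖(inner ℂ (T x) x : ℂ)‖ ^ 2 ≤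
      (α / 2) * numRad (T * T) +
        ‖(α / 4) • (ContinuousLinearMap.adjoint T * T) +
          (1 - 3 * α / 4) • (T * ContinuousLinearMap.adjoint T)‖ := by
  set a := ‖T x‖ with ha
  set b := ‖(ContinuousLinearMap.adjoint T) x‖ with hb
  set r := ‖(inner ℂ (T x) x : ℂ)‖ with hr
  set c := ‖(inner ℂ (T (T x)) x : ℂ)‖ with hc
  set S := (α / 4) • (ContinuousLinearMap.adjoint T * T) +
      (1 - 3 * α / 4) • (T * ContinuousLinearMap.adjoint T) with hS
  -- identities
  have hid1 : (inner ℂ x ((ContinuousLinearMap.adjoint T) x) : ℂ) = inner ℂ (T x) x :=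
    ContinuousLinearMap.adjoint_inner_right T x x
  have hid2 : (inner ℂ (T x) ((ContinuousLinearMap.adjoint T) x) : ℂ) = inner ℂ (T (T x)) x :=
    ContinuousLinearMap.adjoint_inner_right T (T x) x
  -- Buzano: r^2 ≤ (a*b + c)/2
  have h1 : r ^ 2 ≤ (a * b + c) / 2 := by
    have := buzano (T x) ((ContinuousLinearMap.adjoint T) x) x hx
    rw [hid1, hid2] at this
    calc r ^ 2 = ‖(inner ℂ (T x) x : ℂ) * (inner ℂ (T x) x : ℂ)‖ := by
          rw [norm_mul]; ring
      _ ≤ _ := this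
  -- r ≤ b
  have h2 : r ≤ b := by
    rw [hr, ← hid1]
    calc ‖(inner ℂ x ((ContinuousLinearMap.adjoint T) x) : ℂ)‖
        ≤ ‖x‖ * ‖(ContinuousLinearMap.adjoint T) x‖ := norm_inner_le_norm _ _
      _ = b := by rw [hx, one_mul]
  -- c ≤ numRad (T*T)
  have h3 : c ≤ numRad (T * T) := by
    have := le_numRad (T * T) hx
    rwa [ContinuousLinearMap.mul_apply] at this
  -- quadratic form bound
  have h4 : α / 4 * a ^ 2 + (1 - 3 * α / 4) * b ^ 2 ≤ ‖S‖ := by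
    have e1 : (inner ℂ ((ContinuousLinearMap.adjoint T * T) x) x : ℂ) = ((a ^ 2 : ℝ) : ℂ) := by
      rw [ContinuousLinearMap.mul_apply, ContinuousLinearMap.adjoint_inner_left,
        inner_self_eq_norm_sq_to_K]
      push_cast; rfl
    have e2 : (inner ℂ ((T * ContinuousLinearMap.adjoint T) x) x : ℂ) = ((b ^ 2 : ℝ) : ℂ) := by
      rw [ContinuousLinearMap.mul_apply, ← ContinuousLinearMap.adjoint_inner_right,
        inner_self_eq_norm_sq_to_K]
      push_cast; rfl
    have hSx : (inner ℂ (S x) x : ℂ) =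
        ((α / 4 * a ^ 2 + (1 - 3 * α / 4) * b ^ 2 : ℝ) : ℂ) := by
      rw [hS, ContinuousLinearMap.add_apply, inner_add_left,
        ContinuousLinearMap.smul_apply, ContinuousLinearMap.smul_apply,
        RCLike.real_smul_eq_coe_smul (K := ℂ), RCLike.real_smul_eq_coe_smul (K := ℂ),
        inner_smul_left, inner_smul_left, e1, e2, RCLike.conj_ofReal, RCLike.conj_ofReal]
      have hco : ∀ t : ℝ, (RCLike.ofReal t : ℂ) = Complex.ofReal t := fun _ => rfl
      rw [hco, hco]
      push_cast
      ring
    have : ‖(inner ℂ (S x) x : ℂ)‖ ≤ ‖S‖ := by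
      calc ‖(inner ℂ (S x) x : ℂ)‖ ≤ ‖S x‖ * ‖x‖ := norm_inner_le_norm _ _
        _ ≤ ‖S‖ * ‖x‖ * ‖x‖ := by gcongr; exact S.le_opNorm x
        _ = ‖S‖ := by rw [hx]; ring
    rw [hSx] at this
    calc α / 4 * a ^ 2 + (1 - 3 * α / 4) * b ^ 2
        ≤ |α / 4 * a ^ 2 + (1 - 3 * α / 4) * b ^ 2| := le_abs_self _
      _ = ‖((α / 4 * a ^ 2 + (1 - 3 * α / 4) * b ^ 2 : ℝ) : ℂ)‖ := by
          rw [Complex.norm_real, Real.norm_eq_abs]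
      _ ≤ ‖S‖ := this
  -- combine
  have h5 : r ^ 2 ≤ b ^ 2 := by
    have hr0 : 0 ≤ r := norm_nonneg _
    nlinarith
  have hab : a * b ≤ (a ^ 2 + b ^ 2) / 2 := by nlinarith [sq_nonneg (a - b)]
  have h1' : r ^ 2 ≤ (a ^ 2 + b ^ 2) / 4 + c / 2 := by linarith
  have hA : α * (r ^ 2) ≤ α * ((a ^ 2 + b ^ 2) / 4 + c / 2) :=
    mul_le_mul_of_nonneg_left h1' hα0
  have hB : (1 - α) * (r ^ 2) ≤ (1 - α) * b ^ 2 :=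
    mul_le_mul_of_nonneg_left h5 (by linarith)
  have hcw : α / 2 * c ≤ α / 2 * numRad (T * T) :=
    mul_le_mul_of_nonneg_left h3 (by linarith)
  nlinarith [hA, hB, hcw, h4]

theorem stmt11 {H : Type*} [NormedAddCommGroup H] [InnerProductSpace ℂ H] [CompleteSpace H]
    (T : H →L[ℂ] H) :
    (∀ α : ℝ, 0 ≤ α → α ≤ 1 →
      numRad T ^ 2 ≤
        (α / 2) * numRad (T * T) +
          ‖(α / 4) • (ContinuousLinearMap.adjoint T * T) +
            (1 - 3 * α / 4) • (T * ContinuousLinearMap.adjoint T)‖) ∧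
    numRad T ^ 2 ≤
      (1 / 2) * numRad (T * T) +
        (1 / 4) * ‖ContinuousLinearMap.adjoint T * T + T * ContinuousLinearMap.adjoint T‖ := by
  have main : ∀ α : ℝ, 0 ≤ α → α ≤ 1 →
      numRad T ^ 2 ≤
        (α / 2) * numRad (T * T) +
          ‖(α / 4) • (ContinuousLinearMap.adjoint T * T) +
            (1 - 3 * α / 4) • (T * ContinuousLinearMap.adjoint T)‖ := by
    intro α hα0 hα1
    set B := (α / 2) * numRad (T * T) +
        ‖(α / 4) • (ContinuousLinearMap.adjoint T * T) +
          (1 - 3 * α / 4) • (T * ContinuousLinearMap.adjoint T)‖ with hB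
    have hB0 : 0 ≤ B := by
      have := numRad_nonneg (T * T)
      have := norm_nonneg ((α / 4) • (ContinuousLinearMap.adjoint T * T) +
          (1 - 3 * α / 4) • (T * ContinuousLinearMap.adjoint T))
      positivity
    have hle : numRad T ≤ Real.sqrt B := by
      apply Real.sSup_le
      · rintro r ⟨x, hx, rfl⟩
        have hpt := stmt11_pointwise T hα0 hα1 hx
        have : Real.sqrt (‖(inner ℂ (T x) x : ℂ)‖ ^ 2) ≤ Real.sqrt B :=
          Real.sqrt_le_sqrt hpt
        rwa [Real.sqrt_sq (norm_nonneg _)] at this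
      · exact Real.sqrt_nonneg _
    calc numRad T ^ 2 ≤ Real.sqrt B ^ 2 :=
          pow_le_pow_left₀ (numRad_nonneg T) hle 2
      _ = B := Real.sq_sqrt hB0
  refine ⟨main, ?_⟩
  have h := main 1 zero_le_one le_rfl
  have hnorm : ‖((1:ℝ) / 4) • (ContinuousLinearMap.adjoint T * T) +
      (1 - 3 * (1:ℝ) / 4) • (T * ContinuousLinearMap.adjoint T)‖ =
      (1 / 4) * ‖ContinuousLinearMap.adjoint T * T + T * ContinuousLinearMap.adjoint T‖ := by
    rw [show (1 - 3 * (1:ℝ) / 4) = 1 / 4 by norm_num, ← smul_add,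
      RCLike.real_smul_eq_coe_smul (K := ℂ), norm_smul]
    norm_num
  rw [hnorm] at h
  convert h using 2 <;> norm_num
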